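/- Let V be a finite-dimensional real vector space with the canonical pairing ⟨⟨(X,α),(X',α')⟩⟩ := α'(X) + α(X') on V × V*. If Δ ⊆ V is a subspace and ω : V → V* is a linear map satisfying ω(v)(w) = -ω(w)(v) for all v,w (i.e., ω is skew), then the subspace D := { (v, α) ∈ V × V* : v ∈ Δ and α - ω(v) ∈ Δ° } (where Δ° is the annihilator of Δ) satisfies D^⊥ = D, where D^⊥ := { (X,α) : ⟨⟨(X,α),(X',α')⟩⟩ = 0 for all (X',α') ∈ D }. That is, D is a (linear) Dirac structure. -/
import Mathlib


/-- The induced Dirac structure `D = {(v,α) : v ∈ Δ, α - ω v ∈ Δ°}` on a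
finite-dimensional real vector space, with ω skew, satisfies `D^⊥ = D`. -/
theorem stmt_0 {V : Type*} [AddCommGroup V] [Module ℝ V] [FiniteDimensional ℝ V]
    (Δ : Submodule ℝ V) (ω : V →ₗ[ℝ] Module.Dual ℝ V)
    (hω : ∀ v w : V, ω v w = - ω w v) :
    (let D : Set (V × Module.Dual ℝ V) :=
      {p | p.1 ∈ Δ ∧ p.2 - ω p.1 ∈ Δ.dualAnnihilator};
     {p : V × Module.Dual ℝ V | ∀ q ∈ D, q.2 p.1 + p.2 q.1 = 0} = D) := by
  intro D
  ext p
  simp only [Set.mem_setOf_eq, D]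
  constructor
  · intro hp
    have h1 : p.1 ∈ Δ := by
      rw [← Subspace.forall_mem_dualAnnihilator_apply_eq_zero_iff Δ p.1]
      intro φ hφ
      have := hp (0, φ) ⟨Δ.zero_mem, by simpa using hφ⟩
      simpa using this
    refine ⟨h1, ?_⟩
    rw [Submodule.mem_dualAnnihilator]
    intro w hw
    have := hp (w, ω w) ⟨hw, by simp⟩
    simp only [LinearMap.sub_apply]
    have h2 : ω p.1 w = - ω w p.1 := hω _ _
    linarith [this]
  · rintro ⟨h1, h2⟩ q ⟨hq1, hq2⟩
    rw [Submodule.mem_dualAnnihilator] at h2 hq2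
    have e1 := hq2 p.1 h1
    have e2 := h2 q.1 hq1
    simp only [LinearMap.sub_apply] at e1 e2
    have h3 : ω p.1 q.1 = - ω q.1 p.1 := hω _ _
    linarith
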